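/- Let P be a polynomial with complex coefficients of degree d. Then for every complex number z with |z| < 1, the series −∑_{k=1}^∞ P(−k)·z^k converges and equals ∑_{j=0}^{d} c_j · (z/(z−1))^{j+1}, where c_j = ∑_{k=1}^{j+1} (−1)^{k−1} · P(−k) · C(j, k−1) and C(j, k−1) denotes the binomial coefficient. -/

import Mathlib

open Finset Polynomial
open scoped fwdDiff

private lemma fwdDiff_poly (R : Polynomial ℂ) :
    fwdDiff (1:ℕ) (fun k : ℕ => R.eval (k : ℂ)) =
      fun k : ℕ => (R.comp (X + 1) - R).eval (k : ℂ) := by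
  funext k
  simp only [fwdDiff, eval_sub, eval_comp, eval_add, eval_X, eval_one]
  push_cast
  ring

private lemma fwdDiff_iter_poly_zero : ∀ (n : ℕ) (R : Polynomial ℂ), R.degree < n →
    (fwdDiff (1:ℕ))^[n] (fun k : ℕ => R.eval (k : ℂ)) = 0 := by
  intro n
  induction n with
  | zero =>
    intro R hR
    have hR0 : R = 0 := by
      by_contra h
      have := zero_le_degree_iff.2 h
      simp only [Nat.cast_zero] at hR
      exact absurd hR (not_lt.2 this)
    subst hR0
    funext k
    simp
  | succ n ih =>
    intro R hR
    rw [Function.iterate_succ_apply, fwdDiff_poly]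
    apply ih
    by_cases h0 : R.degree ≤ 0
    · have : R = C (R.coeff 0) := eq_C_of_degree_le_zero h0
      rw [this]
      simp only [C_comp, sub_self, degree_zero]
      exact WithBot.bot_lt_coe n
    · have hR0 : R ≠ 0 := fun h => h0 (by simp [h])
      have hX1 : (X + 1 : Polynomial ℂ).natDegree = 1 := by
        simpa using natDegree_X_add_C (1 : ℂ)
      have hdeg : (R.comp (X + 1)).natDegree = R.natDegree := by
        rw [natDegree_comp, hX1, mul_one]
      have hlc : (R.comp (X + 1)).leadingCoeff = R.leadingCoeff := by
        rw [leadingCoeff_comp (by rw [hX1]; norm_num)]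
        have : (X + 1 : Polynomial ℂ).leadingCoeff = 1 := by
          simpa using (monic_X_add_C (1 : ℂ)).leadingCoeff
        rw [this, one_pow, mul_one]
      have hc0 : R.comp (X + 1) ≠ 0 := by
        intro h
        apply hR0
        rw [← leadingCoeff_eq_zero, ← hlc, h, leadingCoeff_zero]
      have hdeg' : (R.comp (X + 1)).degree = R.degree := by
        rw [degree_eq_natDegree hc0, degree_eq_natDegree hR0, hdeg]
      have hlt := degree_sub_lt hdeg' hc0 hlc
      rw [hdeg'] at hlt
      calc (R.comp (X + 1) - R).degree < R.degree := hlt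
        _ ≤ (n : WithBot ℕ) := by
          rw [degree_eq_natDegree hR0] at hR ⊢
          exact_mod_cast Nat.lt_succ_iff.mp (by exact_mod_cast hR)

set_option maxHeartbeats 1000000 in
private lemma hasSum_choose_pow (j : ℕ) {z : ℂ} (hz : ‖z‖ < 1) :
    HasSum (fun k : ℕ => (k.choose j : ℂ) * z ^ (k + 1))
      ((-1 : ℂ) ^ (j + 1) * (z / (z - 1)) ^ (j + 1)) := by
  have hz' : ‖z‖ < 1 := by exact hz
  have h1 : HasSum (fun n : ℕ => ((n + j).choose j : ℂ) * z ^ n) (1 / (1 - z) ^ (j + 1)) :=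
    hasSum_choose_mul_geometric_of_norm_lt_one j hz'
  have h2 : HasSum (fun n : ℕ => ((n + j).choose j : ℂ) * z ^ n * z ^ (j + 1))
      (1 / (1 - z) ^ (j + 1) * z ^ (j + 1)) := h1.mul_right _
  have hz1 : (1 : ℂ) - z ≠ 0 := by
    intro h
    have : z = 1 := by linear_combination -h
    rw [this] at hz; simp at hz
  have hz2 : z - 1 ≠ 0 := fun h => hz1 (by linear_combination -h)
  have heq : (1 : ℂ) / (1 - z) ^ (j + 1) * z ^ (j + 1) =
      (-1 : ℂ) ^ (j + 1) * (z / (z - 1)) ^ (j + 1) := by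
    rw [← mul_pow, show (-1 : ℂ) * (z / (z - 1)) = z / (1 - z) from by field_simp; ring, div_pow]
    ring
  rw [heq] at h2
  have h3 : (fun n : ℕ => ((n + j).choose j : ℂ) * z ^ n * z ^ (j + 1)) =
      fun n => (fun k : ℕ => (k.choose j : ℂ) * z ^ (k + 1)) (n + j) := by
    funext n
    simp only
    rw [mul_assoc, ← pow_add]
    ring
  rw [h3] at h2
  have h4 := (hasSum_nat_add_iff (f := fun k : ℕ => (k.choose j : ℂ) * z ^ (k + 1)) j).mp h2
  have h5 : ∑ i ∈ range j, (i.choose j : ℂ) * z ^ (i + 1) = 0 := by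
    apply Finset.sum_eq_zero
    intro i hi
    rw [Nat.choose_eq_zero_of_lt (mem_range.mp hi)]
    simp
  rwa [h5, add_zero] at h4

theorem nesterenko_polynomial_series (P : Polynomial ℂ) (d : ℕ) (hd : P.natDegree = d) :
    ∀ z : ℂ, ‖z‖ < 1 →
      HasSum (fun k : ℕ => -(P.eval (-((k : ℂ) + 1)) * z ^ (k + 1)))
        (∑ j ∈ Finset.range (d + 1),
          (∑ k ∈ Finset.range (j + 1),
              (-1 : ℂ) ^ k * P.eval (-((k : ℂ) + 1)) * (j.choose k : ℂ)) *
            (z / (z - 1)) ^ (j + 1)) := by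
  intro z hz
  set Q : ℕ → ℂ := fun k => P.eval (-((k : ℂ) + 1)) with hQ
  set a : ℕ → ℂ := fun j => (fwdDiff (1:ℕ))^[j] Q 0 with ha
  -- Q is evaluation of a polynomial
  have hQpoly : Q = fun k : ℕ => (P.comp (-(X + 1))).eval (k : ℂ) := by
    funext k
    simp [hQ, eval_comp]
  -- vanishing of high forward differences
  have hvanish : ∀ j, d < j → a j = 0 := by
    intro j hj
    have hdegR : (P.comp (-(X + 1))).degree < ((d + 1 : ℕ) : WithBot ℕ) := by
      apply lt_of_le_of_lt (degree_le_natDegree)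
      rw [natDegree_comp]
      have : (-(X + 1) : Polynomial ℂ).natDegree = 1 := by
        rw [natDegree_neg]; simpa using natDegree_X_add_C (1 : ℂ)
      rw [this, mul_one, hd]
      exact_mod_cast Nat.lt_succ_self d
    have hz0 := fwdDiff_iter_poly_zero (d + 1) (P.comp (-(X + 1))) hdegR
    obtain ⟨m, rfl⟩ : ∃ m, j = m + (d + 1) := ⟨j - (d + 1), by omega⟩
    have hzero : ∀ m : ℕ, (fwdDiff (1:ℕ))^[m] (0 : ℕ → ℂ) = 0 := by
      intro m
      induction m with
      | zero => rfl
      | succ m ihm => rw [Function.iterate_succ_apply, show fwdDiff (1:ℕ) (0 : ℕ → ℂ) = 0 from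
          funext fun k => by simp [fwdDiff], ihm]
    rw [ha]
    simp only [hQpoly, Function.iterate_add_apply, hz0, hzero]
    rfl
  -- Newton expansion of Q k
  have hNewton : ∀ k : ℕ, Q k = ∑ j ∈ range (d + 1), (k.choose j : ℂ) * a j := by
    intro k
    have h1 := shift_eq_sum_fwdDiff_iter (1 : ℕ) Q k 0
    have h2 : (0 + k • 1 : ℕ) = k := by simp
    rw [h2] at h1
    rw [h1]
    have h3 : ∀ j, (k.choose j) • ((fwdDiff (1:ℕ))^[j] Q 0) = (k.choose j : ℂ) * a j := by
      intro j; rw [nsmul_eq_mul]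
    simp only [h3]
    rcases le_total k d with hkd | hkd
    · apply Finset.sum_subset
      · exact Finset.range_subset_range.mpr (by omega)
      · intro j _ hj
        rw [Nat.choose_eq_zero_of_lt (by simp at hj ⊢; omega)]
        simp
    · symm
      apply Finset.sum_subset
      · exact Finset.range_subset_range.mpr (by omega)
      · intro j _ hj
        rw [hvanish j (by simp at hj ⊢; omega)]
        simp
  -- pointwise rewrite of the summand
  have hpt : ∀ k : ℕ, -(P.eval (-((k : ℂ) + 1)) * z ^ (k + 1)) =
      ∑ j ∈ range (d + 1), (-(a j)) * ((k.choose j : ℂ) * z ^ (k + 1)) := by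
    intro k
    have : P.eval (-((k : ℂ) + 1)) = Q k := rfl
    rw [this, hNewton k, Finset.sum_mul, ← Finset.sum_neg_distrib]
    apply Finset.sum_congr rfl
    intro j _
    ring
  -- HasSum for each j
  have hterm : ∀ j ∈ range (d + 1),
      HasSum (fun k : ℕ => (-(a j)) * ((k.choose j : ℂ) * z ^ (k + 1)))
        ((-(a j)) * ((-1 : ℂ) ^ (j + 1) * (z / (z - 1)) ^ (j + 1))) := by
    intro j _
    exact (hasSum_choose_pow j hz).mul_left _
  have hsum := hasSum_sum hterm
  -- identify the coefficients
  have hcoef : ∀ j, (-(a j)) * ((-1 : ℂ) ^ (j + 1) * (z / (z - 1)) ^ (j + 1)) =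
      (∑ k ∈ Finset.range (j + 1),
        (-1 : ℂ) ^ k * P.eval (-((k : ℂ) + 1)) * (j.choose k : ℂ)) * (z / (z - 1)) ^ (j + 1) := by
    intro j
    have h1 : a j = ∑ k ∈ range (j + 1), ((-1 : ℤ) ^ (j - k) * (j.choose k) : ℤ) • Q (0 + k • 1) :=
      fwdDiff_iter_eq_sum_shift (1 : ℕ) Q j 0
    have h2 : (-(a j)) * (-1 : ℂ) ^ (j + 1) =
        ∑ k ∈ Finset.range (j + 1), (-1 : ℂ) ^ k * P.eval (-((k : ℂ) + 1)) * (j.choose k : ℂ) := by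
      rw [h1, neg_mul, Finset.sum_mul, ← Finset.sum_neg_distrib]
      apply Finset.sum_congr rfl
      intro k hk
      have hk' : k ≤ j := by simp at hk; omega
      have h3 : (0 + k • 1 : ℕ) = k := by simp
      rw [h3, zsmul_eq_mul]
      push_cast
      have hpow : (-1 : ℂ) ^ (j - k) * (-1 : ℂ) ^ (j + 1) = -(-1 : ℂ) ^ k := by
        rw [← pow_add, show j - k + (j + 1) = 2 * (j - k) + (k + 1) by omega, pow_add, pow_mul,
          pow_succ]
        ring
      rw [show P.eval (-((k : ℂ) + 1)) = Q k from rfl]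
      linear_combination (-(j.choose k : ℂ) * Q k) * hpow
    calc (-(a j)) * ((-1 : ℂ) ^ (j + 1) * (z / (z - 1)) ^ (j + 1))
        = ((-(a j)) * (-1 : ℂ) ^ (j + 1)) * (z / (z - 1)) ^ (j + 1) := by ring
      _ = _ := by rw [h2]
  rw [funext hcoef] at hsum
  convert hsum using 1
  funext k
  exact hpt k
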